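/- Let λ > 1 and let (T_n)_{n≥1} be independent random variables on a probability space, where T_n is exponentially distributed with rate (1 − λ^{−2}) λ^{2n} (equivalently, mean λ^{−2n}/(1 − λ^{−2})). Then for every t > 0, P(Σ_{n≥1} T_n > t) ≤ ( exp( (λ² − 1)³ λ^{−4} t ) − 1 )^{−1}. In particular, for every t > log 2 · λ⁴ (λ² − 1)^{−3} one has P(Σ_{n≥1} T_n > t) < 1. -/

import Mathlib

open MeasureTheory ProbabilityTheory

/- STATEMENT 8.
Let `lam > 1` and `(T_n)_{n≥1}` be independent random variables, `T_n` exponential with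
rate `(1 − λ^{−2}) λ^{2n}` (characterized by its survival function).  Here `T n` denotes
`T_{n+1}`.  Then for every `t > 0`,
`P(Σ_{n≥1} T_n > t) ≤ (exp((λ²−1)³ λ^{−4} t) − 1)⁻¹`, and in particular for every
`t > log 2 · λ⁴ (λ²−1)^{−3}` one has `P(Σ_{n≥1} T_n > t) < 1`. -/
theorem stmt_8 {Ω : Type*} [MeasurableSpace Ω] (P : Measure Ω) [IsProbabilityMeasure P]
    (lam : ℝ) (hlam : 1 < lam) (T : ℕ → Ω → ℝ)
    (hmeas : ∀ n : ℕ, Measurable (T n))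
    (hindep : iIndepFun T P)
    (hdist : ∀ n : ℕ, ∀ s : ℝ, 0 ≤ s →
      P {ω | s < T n ω}
        = ENNReal.ofReal
            (Real.exp (-((1 - lam ^ (-2 : ℤ)) * lam ^ (2 * (n + 1)) * s)))) :
    ∀ t : ℝ, 0 < t →
      (P {ω | ENNReal.ofReal t < ∑' n : ℕ, ENNReal.ofReal (T n ω)}
        ≤ ENNReal.ofReal ((Real.exp ((lam ^ 2 - 1) ^ 3 / lam ^ 4 * t) - 1)⁻¹))
      ∧ (Real.log 2 * lam ^ 4 / (lam ^ 2 - 1) ^ 3 < t →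
          P {ω | ENNReal.ofReal t < ∑' n : ℕ, ENNReal.ofReal (T n ω)} < 1) := by
  intro t ht
  have hlam0 : (0:ℝ) < lam := by linarith
  have hlam2 : (1:ℝ) < lam ^ 2 := by nlinarith
  set c : ℝ := (lam ^ 2 - 1) ^ 3 / lam ^ 4 with hc
  have hc0 : 0 < c := div_pos (pow_pos (by nlinarith) 3) (by positivity)
  set x : ℝ := (lam ^ 2)⁻¹ with hxdef
  have hx0 : 0 < x := by positivity
  have hx1 : x < 1 := inv_lt_one_of_one_lt₀ hlam2
  set a : ℝ := (lam ^ 2 - 1) ^ 2 / lam ^ 4 with ha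
  set θ : ℕ → ℝ := fun n => a * (((n : ℝ) + 1) * x ^ n) with hθ
  have hθ0 : ∀ n, 0 < θ n := by
    intro n
    have : 0 < a := div_pos (by nlinarith) (by positivity)
    positivity
  have hsumθ : HasSum θ 1 := by
    have h1 : HasSum (fun n : ℕ => (n : ℝ) * x ^ n) (x / (1 - x) ^ 2) :=
      hasSum_coe_mul_geometric_of_norm_lt_one
        (by rw [Real.norm_eq_abs, abs_of_pos hx0]; exact hx1)
    have h2 : HasSum (fun n : ℕ => x ^ n) ((1 - x)⁻¹) :=
      hasSum_geometric_of_lt_one hx0.le hx1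
    have h3 := (h1.add h2).mul_left a
    have hval : a * (x / (1 - x) ^ 2 + (1 - x)⁻¹) = 1 := by
      have h2ne : (lam ^ 2 : ℝ) ≠ 0 := by positivity
      have hne : lam ^ 2 - 1 ≠ 0 := by nlinarith
      have h1x : 1 - x = (lam ^ 2 - 1) / lam ^ 2 := by
        field_simp [hxdef]
        rw [hxdef, sub_mul, inv_mul_cancel₀ h2ne, one_mul]
      rw [h1x, ha, hxdef]
      field_simp
      ring
    have h3' : HasSum θ (a * (x / (1 - x) ^ 2 + (1 - x)⁻¹)) := by
      convert h3 using 2 with n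
      · rfl
      simp only [hθ]
      ring
    rwa [hval] at h3'
  -- exponent identity
  have key : ∀ n : ℕ, (1 - lam ^ (-2 : ℤ)) * lam ^ (2 * (n + 1)) * (θ n * t)
      = c * ((n : ℝ) + 1) * t := by
    intro n
    have hz : lam ^ (-2 : ℤ) = x := by
      rw [hxdef, zpow_neg]
      norm_cast
    have hp : lam ^ (2 * (n + 1)) = lam ^ 2 * (lam ^ 2) ^ n := by
      rw [pow_mul, pow_succ]
      ring
    have hxn : (lam ^ 2) ^ n * x ^ n = 1 := by
      rw [hxdef, ← mul_pow, mul_inv_cancel₀ (by positivity), one_pow]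
    have h2ne : (lam ^ 2 : ℝ) ≠ 0 := by positivity
    rw [hz, hp, hθ, hc, ha, hxdef] at *
    field_simp
    rw [one_div, mul_assoc, hxn, mul_one]
  -- each term
  have hterm : ∀ n : ℕ, P {ω | θ n * t < T n ω}
      = ENNReal.ofReal (Real.exp (-(c * t)) ^ (n + 1)) := by
    intro n
    rw [hdist n (θ n * t) (le_of_lt (mul_pos (hθ0 n) ht))]
    congr 1
    rw [key n]
    rw [← Real.exp_nat_mul]
    congr 1
    push_cast
    ring
  -- union bound subset
  have hsub : {ω | ENNReal.ofReal t < ∑' n : ℕ, ENNReal.ofReal (T n ω)}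
      ⊆ ⋃ n, {ω | θ n * t < T n ω} := by
    intro ω hω
    by_contra h
    simp only [Set.mem_iUnion, Set.mem_setOf_eq, not_exists, not_lt] at h
    have hle : ∑' n : ℕ, ENNReal.ofReal (T n ω) ≤ ∑' n : ℕ, ENNReal.ofReal (θ n * t) :=
      ENNReal.tsum_le_tsum fun n => ENNReal.ofReal_le_ofReal (h n)
    have heq : ∑' n : ℕ, ENNReal.ofReal (θ n * t) = ENNReal.ofReal t := by
      rw [← ENNReal.ofReal_tsum_of_nonneg (fun n => (mul_pos (hθ0 n) ht).le)
        ((hsumθ.mul_right t).summable)]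
      rw [(hsumθ.mul_right t).tsum_eq, one_mul]
    rw [Set.mem_setOf_eq] at hω
    exact absurd hω (not_lt.mpr (heq ▸ hle))
  -- geometric sum
  have hct : 0 < c * t := mul_pos hc0 ht
  set q : ℝ := Real.exp (-(c * t)) with hqdef
  have hq0 : 0 < q := Real.exp_pos _
  have hq1 : q < 1 := by
    rw [hqdef, Real.exp_lt_one_iff]
    linarith
  have hE1 : 1 < Real.exp (c * t) := by rw [← Real.exp_zero]; exact Real.exp_lt_exp.mpr hct
  have hsq : HasSum (fun n : ℕ => q ^ (n + 1)) (Real.exp (c * t) - 1)⁻¹ := by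
    have hg : HasSum (fun n : ℕ => q ^ n * q) ((1 - q)⁻¹ * q) :=
      (hasSum_geometric_of_lt_one hq0.le hq1).mul_right q
    have hval : (1 - q)⁻¹ * q = (Real.exp (c * t) - 1)⁻¹ := by
      have hq : q = (Real.exp (c * t))⁻¹ := by
        rw [hqdef, Real.exp_neg]
      have hEne : Real.exp (c * t) ≠ 0 := (Real.exp_pos _).ne'
      have hE1ne : Real.exp (c * t) - 1 ≠ 0 := by linarith
      rw [hq]
      field_simp
    have : HasSum (fun n : ℕ => q ^ (n + 1)) ((1 - q)⁻¹ * q) := by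
      convert hg using 2 with n
      exact pow_succ q n
    rwa [hval] at this
  have hmain : P {ω | ENNReal.ofReal t < ∑' n : ℕ, ENNReal.ofReal (T n ω)}
      ≤ ENNReal.ofReal ((Real.exp (c * t) - 1)⁻¹) := by
    calc P {ω | ENNReal.ofReal t < ∑' n : ℕ, ENNReal.ofReal (T n ω)}
        ≤ P (⋃ n, {ω | θ n * t < T n ω}) := measure_mono hsub
      _ ≤ ∑' n : ℕ, P {ω | θ n * t < T n ω} := measure_iUnion_le _
      _ = ∑' n : ℕ, ENNReal.ofReal (q ^ (n + 1)) := by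
          exact tsum_congr hterm
      _ = ENNReal.ofReal ((Real.exp (c * t) - 1)⁻¹) := by
          rw [← ENNReal.ofReal_tsum_of_nonneg (fun n => by positivity) hsq.summable,
            hsq.tsum_eq]
  refine ⟨hmain, fun ht2 => ?_⟩
  have hden : (0:ℝ) < (lam ^ 2 - 1) ^ 3 := pow_pos (by nlinarith) 3
  have hctlog : Real.log 2 < c * t := by
    rw [hc]
    rw [div_lt_iff₀ hden] at ht2
    rw [div_mul_eq_mul_div, lt_div_iff₀ (by positivity : (0:ℝ) < lam ^ 4)]
    nlinarith
  have h2lt : (2:ℝ) < Real.exp (c * t) := by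
    have := Real.exp_lt_exp.mpr hctlog
    rwa [Real.exp_log (by norm_num : (0:ℝ) < 2)] at this
  refine lt_of_le_of_lt hmain ?_
  rw [ENNReal.ofReal_lt_one]
  rw [inv_lt_one_iff₀]
  right
  linarith
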